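/- Let 0 ≤ a ≤ k and δ ∈ {0,1}^k with a - |δ| ∈ 2ℕ, where |δ| = Σδᵢ. The number of Sp_{2k}-ballot tableaux of one-column shape (1^a) and weight δ equals ((k-a+1)/(k-|δ|+1)) · C(k-|δ|+1, (a-|δ|)/2). -/

import Mathlib

open Finset

def Acount {k : ℕ} (δ : Fin k → ℕ) (j : ℕ) : ℕ :=
  ∑ i : Fin k, if (i:ℕ) + 1 ≤ j then δ i else 0

open Classical in
noncomputable def BBs (k : ℕ) (δ : Fin k → ℕ) (m : ℕ) : Finset (Finset ℕ) :=
  (Finset.Icc 1 k).powerset.filter (fun B => B.card = m ∧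
    (∀ i : Fin k, (i:ℕ) + 1 ∈ B → δ i = 0) ∧
    ∀ j : ℕ, Acount δ j + 2 * (B ∩ Finset.Icc 1 j).card ≤ j)

lemma mem_BBs {k m : ℕ} {δ : Fin k → ℕ} {B : Finset ℕ} :
    B ∈ BBs k δ m ↔ B ⊆ Finset.Icc 1 k ∧ B.card = m ∧
      (∀ i : Fin k, (i:ℕ) + 1 ∈ B → δ i = 0) ∧
      ∀ j : ℕ, Acount δ j + 2 * (B ∩ Finset.Icc 1 j).card ≤ j := by
  classical
  simp [BBs, Finset.mem_filter, Finset.mem_powerset, and_assoc]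

lemma Acount_le {k : ℕ} {δ : Fin k → ℕ} (hδ : ∀ i, δ i ≤ 1) (j : ℕ) : Acount δ j ≤ j := by
  classical
  calc Acount δ j ≤ ∑ i : Fin k, if (i:ℕ)+1 ≤ j then 1 else 0 := by
        apply Finset.sum_le_sum; intro i _; split
        · exact hδ i
        · exact le_refl 0
    _ = (Finset.univ.filter (fun i : Fin k => (i:ℕ)+1 ≤ j)).card := by
        simp [Finset.sum_ite_eq, Finset.sum_boole]
    _ ≤ (Finset.range j).card := by
        refine Finset.card_le_card_of_injOn (fun i => (i:ℕ)) ?_ ?_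
        · intro i hi
          simp only [Finset.mem_coe, Finset.mem_filter] at hi
          simp only [Finset.mem_coe, Finset.mem_range]; omega
        · intro x _ y _ h
          exact Fin.ext h
    _ = j := by simp

lemma Acount_eq_sum {k : ℕ} (δ : Fin k → ℕ) {j : ℕ} (hj : k ≤ j) :
    Acount δ j = ∑ i, δ i := by
  apply Finset.sum_congr rfl
  intro i _
  have : (i:ℕ) + 1 ≤ j := by have := i.isLt; omega
  simp [this]

lemma sum_le_card {k : ℕ} {δ : Fin k → ℕ} (hδ : ∀ i, δ i ≤ 1) : ∑ i, δ i ≤ k := by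
  calc ∑ i, δ i ≤ ∑ _i : Fin k, 1 := Finset.sum_le_sum (fun i _ => hδ i)
    _ = k := by simp

lemma BBs_zero {k : ℕ} {δ : Fin k → ℕ} (hδ : ∀ i, δ i ≤ 1) : BBs k δ 0 = {∅} := by
  ext B
  simp only [Finset.mem_singleton, mem_BBs, Finset.card_eq_zero]
  constructor
  · rintro ⟨-, h, -⟩; exact h
  · rintro rfl
    refine ⟨by simp, rfl, by simp, fun j => ?_⟩
    simpa using Acount_le hδ j

-- key arithmetic lemma
lemma key_arith (x y m' d C1 C2 : ℕ)
    (hx : x * (2*m'+d+2) = d * C1)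
    (hy : y * (2*m'+d+2) = (d+2) * C2)
    (hid : C1 * (m'+1) = C2 * (m'+d+2)) :
    (x+y) * (2*m'+d+3) = (d+1) * (C2 + C1) := by
  apply Nat.eq_of_mul_eq_mul_right (show 0 < 2*m'+d+2 by omega)
  zify at hx hy hid ⊢
  linear_combination (2*m'+d+3) * hx + (2*m'+d+3) * hy - 2 * hid

lemma inter_Icc_of_subset {B : Finset ℕ} {k j : ℕ} (h : B ⊆ Finset.Icc 1 k) (hj : k ≤ j) :
    B ∩ Finset.Icc 1 j = B :=
  Finset.inter_eq_left.mpr (h.trans (Finset.Icc_subset_Icc_right hj))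

lemma BBs_card : ∀ (k : ℕ) (δ : Fin k → ℕ), (∀ i, δ i ≤ 1) → ∀ m : ℕ,
    (BBs k δ m).card * (k - (∑ i, δ i) + 1) =
      (k - (∑ i, δ i) + 1 - 2*m) * (k - (∑ i, δ i) + 1).choose m := by
  intro k
  induction k with
  | zero =>
    intro δ hδ m
    have hs : ∑ i, δ i = 0 := by simp
    match m with
    | 0 => rw [BBs_zero hδ]; simp
    | (m'+1) =>
      have hempty : BBs 0 δ (m'+1) = ∅ := by
        ext B
        simp only [mem_BBs, Finset.notMem_empty, iff_false, not_and]
        intro hsub hcard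
        exfalso
        have : B = ∅ := by
          rw [← Finset.subset_empty]
          simpa using hsub
        rw [this] at hcard
        simp at hcard
      rw [hempty, hs]
      simp only [Finset.card_empty, Nat.zero_mul, Nat.zero_sub]
      have : 0 - 0 + 1 - 2*(m'+1) = 0 := by omega
      rw [this, Nat.zero_mul]
  | succ k IH =>
    intro δ hδ m
    set δ' : Fin k → ℕ := fun i => δ i.castSucc with hδ'def
    have hδ' : ∀ i, δ' i ≤ 1 := fun i => hδ _
    have hsum : ∑ i, δ i = (∑ i, δ' i) + δ (Fin.last k) := Fin.sum_univ_castSucc δ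
    have hs'le : ∑ i, δ' i ≤ k := sum_le_card hδ'
    have hAc : ∀ j, Acount δ j = Acount δ' j + (if k+1 ≤ j then δ (Fin.last k) else 0) := by
      intro j
      unfold Acount
      rw [Fin.sum_univ_castSucc]
      simp [hδ'def]
    have hAc' : ∀ j, k ≤ j → Acount δ' j = ∑ i, δ' i := fun j hj => Acount_eq_sum δ' hj
    match m with
    | 0 =>
      rw [BBs_zero hδ]
      simp
    | (m'+1) =>
      rcases Nat.lt_or_ge (δ (Fin.last k)) 2 with _ | h2
      swap
      · exact absurd (hδ (Fin.last k)) (by omega)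
      rcases Nat.eq_zero_or_pos (δ (Fin.last k)) with hlast | hpos
      case inr =>
        -- δ last = 1
        have hlast : δ (Fin.last k) = 1 := by omega
        have hEq : BBs (k+1) δ (m'+1) = BBs k δ' (m'+1) := by
          ext B
          simp only [mem_BBs]
          constructor
          · rintro ⟨hsub, hcard, hdisj, hsymp⟩
            have hk1 : (k:ℕ)+1 ∉ B := by
              intro h
              have := hdisj (Fin.last k) (by simpa using h)
              omega
            refine ⟨?_, hcard, ?_, ?_⟩
            · intro x hx
              have hx' := hsub hx
              simp only [Finset.mem_Icc] at hx' ⊢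
              have : x ≠ k+1 := fun h => hk1 (h ▸ hx)
              omega
            · intro i hi
              have := hdisj i.castSucc (by simpa using hi)
              simpa [hδ'def] using this
            · intro j
              have := hsymp j
              rw [hAc j] at this
              omega
          · rintro ⟨hsub, hcard, hdisj, hsymp⟩
            have hsub' : B ⊆ Finset.Icc 1 (k+1) :=
              hsub.trans (Finset.Icc_subset_Icc_right (by omega))
            refine ⟨hsub', hcard, ?_, ?_⟩
            · intro i hi
              by_cases hik : (i:ℕ) = k
              · exfalso
                have : (k:ℕ)+1 ∈ B := by rw [← hik]; exact hi
                have := hsub this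
                simp at this
              · have hik' : (i:ℕ) < k := by have := i.isLt; omega
                have := hdisj ⟨(i:ℕ), hik'⟩ (by simpa using hi)
                simpa [hδ'def, Fin.castSucc] using this
                -- δ' ⟨i, _⟩ = δ (castSucc ⟨i,_⟩) and castSucc ⟨i,_⟩ = i
            · intro j
              rw [hAc j]
              rcases Nat.lt_or_ge j (k+1) with hj | hj
              · rw [if_neg (by omega)]
                have := hsymp j
                omega
              · rw [if_pos hj]
                have h1 : B ∩ Finset.Icc 1 j = B := inter_Icc_of_subset hsub (by omega)
                have h2 : B ∩ Finset.Icc 1 k = B := inter_Icc_of_subset hsub (le_refl _)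
                have h3 := hsymp k
                rw [h2] at h3
                rw [h1, hAc' j (by omega), ← hAc' k (le_refl _)]
                omega
        rw [hEq, hsum, hlast]
        have harith : k + 1 - ((∑ i, δ' i) + 1) = k - ∑ i, δ' i := by omega
        rw [harith]
        exact IH δ' hδ' (m'+1)
      case inl =>
        -- δ last = 0
        have hAc0 : ∀ j, Acount δ j = Acount δ' j := by
          intro j; rw [hAc j, hlast]; simp
        have hsum0 : ∑ i, δ i = ∑ i, δ' i := by rw [hsum, hlast]; omega
        -- split on k+1 ∈ B
        have hsplit := Finset.card_filter_add_card_filter_not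
          (s := BBs (k+1) δ (m'+1)) (p := fun B => (k:ℕ)+1 ∈ B)
        -- part without k+1
        have hpart1 : (BBs (k+1) δ (m'+1)).filter (fun B => ¬ ((k:ℕ)+1 ∈ B)) = BBs k δ' (m'+1) := by
          classical
          ext B
          simp only [Finset.mem_filter, mem_BBs]
          constructor
          · rintro ⟨⟨hsub, hcard, hdisj, hsymp⟩, hk1⟩
            refine ⟨?_, hcard, ?_, ?_⟩
            · intro x hx
              have hx' := hsub hx
              simp only [Finset.mem_Icc] at hx' ⊢
              have : x ≠ k+1 := fun h => hk1 (h ▸ hx)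
              omega
            · intro i hi
              have := hdisj i.castSucc (by simpa using hi)
              simpa [hδ'def] using this
            · intro j
              have := hsymp j
              rw [hAc0 j] at this
              exact this
          · rintro ⟨hsub, hcard, hdisj, hsymp⟩
            have hk1 : (k:ℕ)+1 ∉ B := by
              intro h
              have := hsub h
              simp at this
            refine ⟨⟨hsub.trans (Finset.Icc_subset_Icc_right (by omega)), hcard, ?_, ?_⟩, hk1⟩
            · intro i hi
              by_cases hik : (i:ℕ) = k
              · rw [show i = Fin.last k from Fin.ext (by simpa using hik)]
                exact hlast
              · have hik' : (i:ℕ) < k := by have := i.isLt; omega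
                have := hdisj ⟨(i:ℕ), hik'⟩ (by simpa using hi)
                simpa [hδ'def, Fin.castSucc] using this
            · intro j
              rw [hAc0 j]
              rcases Nat.lt_or_ge j (k+1) with hj | hj
              · exact hsymp j
              · have h1 : B ∩ Finset.Icc 1 j = B := inter_Icc_of_subset hsub (by omega)
                have h2 : B ∩ Finset.Icc 1 k = B := inter_Icc_of_subset hsub (le_refl _)
                have h3 := hsymp k
                rw [h2] at h3
                rw [h1, hAc' j (by omega), ← hAc' k (le_refl _)]
                omega
        rcases Nat.lt_or_ge (k+1) ((∑ i, δ' i) + 2*(m'+1)) with hbig | hsmall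
        · -- too big: part2 empty and everything vanishes
          have hpart2 : (BBs (k+1) δ (m'+1)).filter (fun B => (k:ℕ)+1 ∈ B) = ∅ := by
            classical
            ext B
            simp only [Finset.mem_filter, mem_BBs, Finset.notMem_empty, iff_false, not_and]
            rintro ⟨hsub, hcard, hdisj, hsymp⟩ hk1
            have h1 : B ∩ Finset.Icc 1 (k+1) = B := inter_Icc_of_subset hsub (le_refl _)
            have h2 := hsymp (k+1)
            rw [h1, hAc0, hAc' (k+1) (by omega), hcard] at h2
            omega
          have hx := IH δ' hδ' (m'+1)
          have hcoeff : k - (∑ i, δ' i) + 1 - 2*(m'+1) = 0 := by omega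
          rw [hcoeff, Nat.zero_mul] at hx
          have hx0 : (BBs k δ' (m'+1)).card = 0 := by
            rcases Nat.mul_eq_zero.mp hx with h | h
            · exact h
            · omega
          have htot : (BBs (k+1) δ (m'+1)).card = 0 := by
            rw [← hsplit, hpart2, hpart1, hx0]
            simp
          rw [htot, hsum0, Nat.zero_mul]
          have : k + 1 - (∑ i, δ' i) + 1 - 2*(m'+1) = 0 := by omega
          rw [this, Nat.zero_mul]
        · -- main case: bijection via erase / insert
          have hpart2 : ((BBs (k+1) δ (m'+1)).filter (fun B => (k:ℕ)+1 ∈ B)).card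
              = (BBs k δ' m').card := by
            classical
            refine Finset.card_bij' (fun B _ => B.erase (k+1)) (fun C _ => insert (k+1) C)
              ?hi ?hj ?hleft ?hright
            case hi =>
              intro B hB
              rw [Finset.mem_filter, mem_BBs] at hB
              obtain ⟨⟨hsub, hcard, hdisj, hsymp⟩, hmem⟩ := hB
              rw [mem_BBs]
              refine ⟨?_, ?_, ?_, ?_⟩
              · intro x hx
                rw [Finset.mem_erase] at hx
                have := hsub hx.2
                simp only [Finset.mem_Icc] at this ⊢
                have := hx.1
                omega
              · rw [Finset.card_erase_of_mem hmem, hcard]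
                omega
              · intro i hi
                rw [Finset.mem_erase] at hi
                have := hdisj i.castSucc (by simpa using hi.2)
                simpa [hδ'def] using this
              · intro j
                rcases Nat.lt_or_ge j (k+1) with hj | hj
                · have heq : (B.erase (k+1)) ∩ Finset.Icc 1 j = B ∩ Finset.Icc 1 j := by
                    ext x
                    simp only [Finset.mem_inter, Finset.mem_erase, Finset.mem_Icc]
                    constructor
                    · rintro ⟨⟨-, h1⟩, h2⟩; exact ⟨h1, h2⟩
                    · rintro ⟨h1, h2⟩; exact ⟨⟨by omega, h1⟩, h2⟩
                  rw [heq, ← hAc0]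
                  exact hsymp j
                · have hcardle : ((B.erase (k+1)) ∩ Finset.Icc 1 j).card ≤ m' := by
                    calc ((B.erase (k+1)) ∩ Finset.Icc 1 j).card
                        ≤ (B.erase (k+1)).card := Finset.card_le_card Finset.inter_subset_left
                      _ = m' := by rw [Finset.card_erase_of_mem hmem, hcard]; omega
                  rw [hAc' j (by omega)]
                  omega
            case hj =>
              intro C hC
              rw [mem_BBs] at hC
              obtain ⟨hsub, hcard, hdisj, hsymp⟩ := hC
              have hk1C : (k:ℕ)+1 ∉ C := by
                intro h
                have := hsub h
                simp at this
              rw [Finset.mem_filter, mem_BBs]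
              refine ⟨⟨?_, ?_, ?_, ?_⟩, Finset.mem_insert_self _ _⟩
              · intro x hx
                rcases Finset.mem_insert.mp hx with rfl | hx'
                · simp
                · have := hsub hx'
                  simp only [Finset.mem_Icc] at this ⊢
                  omega
              · rw [Finset.card_insert_of_notMem hk1C, hcard]
              · intro i hi
                rcases Finset.mem_insert.mp hi with heq | hi'
                · rw [show i = Fin.last k from Fin.ext (by simpa using heq)]
                  exact hlast
                · by_cases hik : (i:ℕ) = k
                  · exfalso
                    have : (k:ℕ)+1 ∈ C := by rw [← hik]; exact hi'
                    exact hk1C this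
                  · have hik' : (i:ℕ) < k := by have := i.isLt; omega
                    have := hdisj ⟨(i:ℕ), hik'⟩ (by simpa using hi')
                    simpa [hδ'def, Fin.castSucc] using this
              · intro j
                rw [hAc0]
                rcases Nat.lt_or_ge j (k+1) with hj | hj
                · have heq : (insert (k+1) C) ∩ Finset.Icc 1 j = C ∩ Finset.Icc 1 j := by
                    ext x
                    simp only [Finset.mem_inter, Finset.mem_insert, Finset.mem_Icc]
                    constructor
                    · rintro ⟨h1 | h1, h2⟩
                      · omega
                      · exact ⟨h1, h2⟩
                    · rintro ⟨h1, h2⟩; exact ⟨Or.inr h1, h2⟩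
                  rw [heq]
                  exact hsymp j
                · have hcardle : ((insert (k+1) C) ∩ Finset.Icc 1 j).card ≤ m' + 1 := by
                    calc ((insert (k+1) C) ∩ Finset.Icc 1 j).card
                        ≤ (insert (k+1) C).card := Finset.card_le_card Finset.inter_subset_left
                      _ = m' + 1 := by rw [Finset.card_insert_of_notMem hk1C, hcard]
                  rw [hAc' j (by omega)]
                  omega
            case hleft =>
              intro B hB
              exact Finset.insert_erase (Finset.mem_filter.mp hB).2
            case hright =>
              intro C hC
              rw [mem_BBs] at hC
              apply Finset.erase_insert
              intro h
              have := hC.1 h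
              simp at this
          -- final arithmetic
          obtain ⟨d, hd⟩ : ∃ d, k - (∑ i, δ' i) + 1 = 2*m' + d + 2 :=
            ⟨k - (∑ i, δ' i) + 1 - 2*(m'+1), by omega⟩
          have hx := IH δ' hδ' (m'+1)
          have hy := IH δ' hδ' m'
          have e1 : k - (∑ i, δ' i) + 1 - 2*(m'+1) = d := by omega
          have e2 : k - (∑ i, δ' i) + 1 - 2*m' = d + 2 := by omega
          rw [e1, hd] at hx
          rw [e2, hd] at hy
          have hid := Nat.choose_succ_right_eq (2*m'+d+2) m'
          rw [show 2*m'+d+2 - m' = m'+d+2 by omega] at hid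
          have hkey := key_arith _ _ m' d _ _ hx hy hid
          have htot : (BBs (k+1) δ (m'+1)).card
              = (BBs k δ' m').card + (BBs k δ' (m'+1)).card := by
            rw [← hsplit, hpart2, hpart1]
          rw [htot, hsum0]
          have e3 : k + 1 - (∑ i, δ' i) + 1 = 2*m'+d+3 := by omega
          have e4 : k + 1 - (∑ i, δ' i) + 1 - 2*(m'+1) = d + 1 := by omega
          rw [e4, e3]
          rw [show (2*m'+d+3) = (2*m'+d+2)+1 from rfl, Nat.choose_succ_succ (2*m'+d+2) m']
          rw [show (2*m'+d+2)+1 = 2*m'+d+3 from rfl]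
          rw [show (BBs k δ' m').card + (BBs k δ' (m'+1)).card
              = (BBs k δ' (m'+1)).card + (BBs k δ' m').card from Nat.add_comm _ _]
          exact hkey

def Aset {k : ℕ} (δ : Fin k → ℕ) : Finset ℕ :=
  (Finset.univ.filter (fun i : Fin k => δ i = 1)).image (fun i : Fin k => (i:ℕ)+1)

lemma mem_Aset {k : ℕ} {δ : Fin k → ℕ} {i : Fin k} : ((i:ℕ)+1 ∈ Aset δ) ↔ δ i = 1 := by
  classical
  simp only [Aset, Finset.mem_image, Finset.mem_filter, Finset.mem_univ, true_and]
  constructor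
  · rintro ⟨i', hi', heq⟩
    rwa [show i' = i from Fin.ext (by omega)] at hi'
  · intro h; exact ⟨i, h, rfl⟩

lemma Aset_subset {k : ℕ} (δ : Fin k → ℕ) : Aset δ ⊆ Finset.Icc 1 k := by
  intro x hx
  simp only [Aset, Finset.mem_image, Finset.mem_filter, Finset.mem_univ, true_and] at hx
  obtain ⟨i, -, rfl⟩ := hx
  simp only [Finset.mem_Icc]
  have := i.isLt
  omega

lemma Aset_card {k : ℕ} {δ : Fin k → ℕ} (hδ : ∀ i, δ i ≤ 1) :
    (Aset δ).card = ∑ i, δ i := by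
  classical
  rw [Aset, Finset.card_image_of_injective _ (fun x y h => Fin.ext (by omega)),
    Finset.card_filter]
  apply Finset.sum_congr rfl
  intro i _
  have := hδ i
  split_ifs <;> omega

lemma Aset_inter_card {k : ℕ} {δ : Fin k → ℕ} (hδ : ∀ i, δ i ≤ 1) (j : ℕ) :
    (Aset δ ∩ Finset.Icc 1 j).card = Acount δ j := by
  classical
  have h1 : Aset δ ∩ Finset.Icc 1 j
      = (Finset.univ.filter (fun i : Fin k => δ i = 1 ∧ (i:ℕ)+1 ≤ j)).image
          (fun i : Fin k => (i:ℕ)+1) := by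
    ext x
    simp only [Aset, Finset.mem_inter, Finset.mem_image, Finset.mem_filter, Finset.mem_univ,
      true_and, Finset.mem_Icc]
    constructor
    · rintro ⟨⟨i, hi, rfl⟩, -, h2⟩; exact ⟨i, ⟨hi, h2⟩, rfl⟩
    · rintro ⟨i, ⟨hi, hle⟩, rfl⟩; exact ⟨⟨i, hi, rfl⟩, by omega, hle⟩
  rw [h1, Finset.card_image_of_injective _ (fun x y h => Fin.ext (by omega)),
    Finset.card_filter, Acount]
  apply Finset.sum_congr rfl
  intro i _
  have := hδ i
  split_ifs <;> omega

def Gmap {k : ℕ} (δ : Fin k → ℕ) (B : Finset ℕ) : Finset ℕ :=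
  (B ∪ Aset δ).image (fun j => 2*j - 1) ∪ B.image (fun j => 2*j)

section Gfacts
variable {k : ℕ} {δ : Fin k → ℕ} {B : Finset ℕ}

lemma union_subset_Icc (hB : B ⊆ Finset.Icc 1 k) : B ∪ Aset δ ⊆ Finset.Icc 1 k :=
  Finset.union_subset hB (Aset_subset δ)

lemma mem_Gmap_elim (hB : B ⊆ Finset.Icc 1 k) {x : ℕ} (hx : x ∈ Gmap δ B) :
    ∃ j, 1 ≤ j ∧ j ≤ k ∧ (x = 2*j-1 ∨ x = 2*j) := by
  rcases Finset.mem_union.mp hx with h | h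
  · obtain ⟨j, hj, rfl⟩ := Finset.mem_image.mp h
    have := union_subset_Icc hB hj
    simp only [Finset.mem_Icc] at this
    exact ⟨j, this.1, this.2, Or.inl rfl⟩
  · obtain ⟨j, hj, rfl⟩ := Finset.mem_image.mp h
    have := hB hj
    simp only [Finset.mem_Icc] at this
    exact ⟨j, this.1, this.2, Or.inr rfl⟩

lemma Gmap_subset (hB : B ⊆ Finset.Icc 1 k) : Gmap δ B ⊆ Finset.Icc 1 (2*k) := by
  intro x hx
  obtain ⟨j, h1, h2, h3⟩ := mem_Gmap_elim hB hx
  simp only [Finset.mem_Icc]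
  omega

lemma mem_Gmap_odd (hB : B ⊆ Finset.Icc 1 k) {j : ℕ} (hj : 1 ≤ j) :
    (2*j - 1 ∈ Gmap δ B) ↔ (j ∈ B ∨ j ∈ Aset δ) := by
  constructor
  · intro hx
    rcases Finset.mem_union.mp hx with h | h
    · obtain ⟨j', hj', heq⟩ := Finset.mem_image.mp h
      have hj'1 : 1 ≤ j' := by
        have := union_subset_Icc hB hj'
        simp only [Finset.mem_Icc] at this
        exact this.1
      have : j' = j := by omega
      subst this
      exact Finset.mem_union.mp hj'
    · obtain ⟨j', hj', heq⟩ := Finset.mem_image.mp h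
      have hj'1 : 1 ≤ j' := by
        have := hB hj'
        simp only [Finset.mem_Icc] at this
        exact this.1
      omega
  · intro h
    apply Finset.mem_union_left
    exact Finset.mem_image.mpr ⟨j, Finset.mem_union.mpr h, rfl⟩

lemma mem_Gmap_even (hB : B ⊆ Finset.Icc 1 k) {j : ℕ} (hj : 1 ≤ j) :
    (2*j ∈ Gmap δ B) ↔ j ∈ B := by
  constructor
  · intro hx
    rcases Finset.mem_union.mp hx with h | h
    · obtain ⟨j', hj', heq⟩ := Finset.mem_image.mp h
      have hj'1 : 1 ≤ j' := by
        have := union_subset_Icc hB hj'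
        simp only [Finset.mem_Icc] at this
        exact this.1
      omega
    · obtain ⟨j', hj', heq⟩ := Finset.mem_image.mp h
      have : j' = j := by omega
      subst this
      exact hj'
  · intro h
    exact Finset.mem_union_right _ (Finset.mem_image.mpr ⟨j, h, rfl⟩)

lemma Gmap_card (hB : B ⊆ Finset.Icc 1 k) (hδ : ∀ i, δ i ≤ 1) (hdisj : Disjoint B (Aset δ)) :
    (Gmap δ B).card = 2 * B.card + ∑ i, δ i := by
  classical
  have hinj1 : Set.InjOn (fun j => 2*j - 1) ((B ∪ Aset δ : Finset ℕ) : Set ℕ) := by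
    intro x hx y hy h
    have hx1 := union_subset_Icc hB (by simpa using hx)
    have hy1 := union_subset_Icc hB (by simpa using hy)
    simp only [Finset.mem_Icc] at hx1 hy1
    simp only at h
    omega
  have hinj2 : Set.InjOn (fun j => 2*j) (B : Set ℕ) := by
    intro x _ y _ h
    simp only at h
    omega
  have hd : Disjoint ((B ∪ Aset δ).image (fun j => 2*j - 1)) (B.image (fun j => 2*j)) := by
    rw [Finset.disjoint_left]
    intro x hx hy
    obtain ⟨j1, hj1, he1⟩ := Finset.mem_image.mp hx
    obtain ⟨j2, hj2, he2⟩ := Finset.mem_image.mp hy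
    have h1 : 1 ≤ j1 := by
      have := union_subset_Icc hB hj1
      simp only [Finset.mem_Icc] at this
      exact this.1
    omega
  rw [Gmap, Finset.card_union_of_disjoint hd, Finset.card_image_of_injOn hinj1,
    Finset.card_image_of_injOn hinj2, Finset.card_union_of_disjoint hdisj, Aset_card hδ]
  ring

lemma Gmap_filter_card (hB : B ⊆ Finset.Icc 1 k) (hδ : ∀ i, δ i ≤ 1) (hdisj : Disjoint B (Aset δ)) (j : ℕ) :
    ((Gmap δ B).filter (fun x => x ≤ 2*j)).card
      = Acount δ j + 2 * (B ∩ Finset.Icc 1 j).card := by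
  classical
  have h1 : (Gmap δ B).filter (fun x => x ≤ 2*j)
      = ((B ∪ Aset δ) ∩ Finset.Icc 1 j).image (fun t => 2*t - 1)
        ∪ (B ∩ Finset.Icc 1 j).image (fun t => 2*t) := by
    ext x
    simp only [Gmap, Finset.mem_filter, Finset.mem_union, Finset.mem_image,
      Finset.mem_inter, Finset.mem_Icc]
    constructor
    · rintro ⟨h | h, hle⟩
      · obtain ⟨t, ht, rfl⟩ := h
        have ht2 : t ∈ B ∪ Aset δ := by
          rw [Finset.mem_union]; exact ht
        have ht' := union_subset_Icc hB ht2
        simp only [Finset.mem_Icc] at ht'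
        left
        exact ⟨t, ⟨ht, ht'.1, by omega⟩, rfl⟩
      · obtain ⟨t, ht, rfl⟩ := h
        have ht' := hB ht
        simp only [Finset.mem_Icc] at ht'
        right
        exact ⟨t, ⟨ht, ht'.1, by omega⟩, rfl⟩
    · rintro (⟨t, ⟨ht, ht1, ht2⟩, rfl⟩ | ⟨t, ⟨ht, ht1, ht2⟩, rfl⟩)
      · exact ⟨Or.inl ⟨t, ht, rfl⟩, by omega⟩
      · exact ⟨Or.inr ⟨t, ht, rfl⟩, by omega⟩
  have hinj1 : Set.InjOn (fun t => 2*t - 1) (((B ∪ Aset δ) ∩ Finset.Icc 1 j : Finset ℕ) : Set ℕ) := by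
    intro x hx y hy h
    simp only [Finset.coe_inter, Set.mem_inter_iff, Finset.mem_coe, Finset.mem_Icc] at hx hy
    simp only at h
    omega
  have hinj2 : Set.InjOn (fun t => 2*t) (((B ∩ Finset.Icc 1 j) : Finset ℕ) : Set ℕ) := by
    intro x _ y _ h
    simp only at h
    omega
  have hd : Disjoint (((B ∪ Aset δ) ∩ Finset.Icc 1 j).image (fun t => 2*t - 1))
      ((B ∩ Finset.Icc 1 j).image (fun t => 2*t)) := by
    rw [Finset.disjoint_left]
    intro x hx hy
    obtain ⟨t1, ht1, he1⟩ := Finset.mem_image.mp hx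
    obtain ⟨t2, ht2, he2⟩ := Finset.mem_image.mp hy
    simp only [Finset.mem_inter, Finset.mem_Icc] at ht1 ht2
    omega
  have hd2 : Disjoint (B ∩ Finset.Icc 1 j) (Aset δ ∩ Finset.Icc 1 j) :=
    (hdisj.mono Finset.inter_subset_left Finset.inter_subset_left)
  rw [h1, Finset.card_union_of_disjoint hd, Finset.card_image_of_injOn hinj1,
    Finset.card_image_of_injOn hinj2, Finset.union_inter_distrib_right,
    Finset.card_union_of_disjoint hd2, Aset_inter_card hδ]
  ring
end Gfacts


open Classical in
noncomputable def WWs (k a : ℕ) (δ : Fin k → ℕ) : Finset (Finset ℕ) :=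
  (Finset.Icc 1 (2*k)).powerset.filter (fun W => W.card = a ∧
    (∀ i : Fin k, (if 2*(i:ℕ)+1 ∈ W then 1 else 0) = (if 2*(i:ℕ)+2 ∈ W then 1 else 0) + δ i) ∧
    ∀ i : ℕ, 1 ≤ i → i ≤ k → (W.filter (fun x => x ≤ 2*i)).card ≤ i)

lemma mem_WWs {k a : ℕ} {δ : Fin k → ℕ} {W : Finset ℕ} :
    W ∈ WWs k a δ ↔ W ⊆ Finset.Icc 1 (2*k) ∧ W.card = a ∧
      (∀ i : Fin k, (if 2*(i:ℕ)+1 ∈ W then 1 else 0) = (if 2*(i:ℕ)+2 ∈ W then 1 else 0) + δ i) ∧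
      ∀ i : ℕ, 1 ≤ i → i ≤ k → (W.filter (fun x => x ≤ 2*i)).card ≤ i := by
  classical
  simp [WWs, Finset.mem_filter, Finset.mem_powerset, and_assoc]

-- the F map and round trip
lemma G_F_eq {k a : ℕ} {δ : Fin k → ℕ} {W : Finset ℕ} (hW : W ∈ WWs k a δ) :
    Gmap δ ((Finset.Icc 1 k).filter (fun j => 2*j ∈ W)) = W := by
  classical
  rw [mem_WWs] at hW
  obtain ⟨hsub, hcard, hwt, hsymp⟩ := hW
  set B := (Finset.Icc 1 k).filter (fun j => 2*j ∈ W) with hBdef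
  have hBsub : B ⊆ Finset.Icc 1 k := Finset.filter_subset _ _
  ext x
  constructor
  · intro hx
    obtain ⟨j, hj1, hjk, hform⟩ := mem_Gmap_elim hBsub hx
    have hi : j - 1 < k := by omega
    have hwt' := hwt ⟨j-1, hi⟩
    simp only at hwt'
    have h1 : 2*(j-1)+1 = 2*j-1 := by omega
    have h2 : 2*(j-1)+2 = 2*j := by omega
    rw [h1, h2] at hwt'
    rcases hform with rfl | rfl
    · -- odd case
      have := (mem_Gmap_odd hBsub hj1).mp hx
      rcases this with hjB | hjA
      · have h2jW : 2*j ∈ W := (Finset.mem_filter.mp hjB).2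
        rw [if_pos h2jW] at hwt'
        by_contra hxw
        rw [if_neg hxw] at hwt'
        omega
      · have hδ1 : δ ⟨j-1, hi⟩ = 1 := by
          have : ((⟨j-1, hi⟩ : Fin k) : ℕ) + 1 = j := by simp; omega
          rw [← this] at hjA
          exact mem_Aset.mp hjA
        rw [hδ1] at hwt'
        by_contra hxw
        rw [if_neg hxw] at hwt'
        omega
    · -- even case
      have := (mem_Gmap_even hBsub hj1).mp hx
      exact (Finset.mem_filter.mp this).2
  · intro hx
    have hxr := hsub hx
    simp only [Finset.mem_Icc] at hxr
    set j := (x+1)/2 with hjdef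
    have hj1 : 1 ≤ j := by omega
    have hjk : j ≤ k := by omega
    have hform : x = 2*j - 1 ∨ x = 2*j := by omega
    have hi : j - 1 < k := by omega
    have hwt' := hwt ⟨j-1, hi⟩
    simp only at hwt'
    have h1 : 2*(j-1)+1 = 2*j-1 := by omega
    have h2 : 2*(j-1)+2 = 2*j := by omega
    rw [h1, h2] at hwt'
    rcases hform with hxo | hxe
    · -- x odd
      rw [hxo] at hx
      rw [if_pos hx] at hwt'
      rw [hxo]
      apply (mem_Gmap_odd hBsub hj1).mpr
      by_cases h2j : 2*j ∈ W
      · left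
        exact Finset.mem_filter.mpr ⟨by simp only [Finset.mem_Icc]; omega, h2j⟩
      · right
        rw [if_neg h2j] at hwt'
        have hδ1 : δ ⟨j-1, hi⟩ = 1 := by omega
        have hco : ((⟨j-1, hi⟩ : Fin k) : ℕ) + 1 = j := by simp; omega
        rw [← hco]
        exact mem_Aset.mpr hδ1
    · rw [hxe] at hx ⊢
      apply (mem_Gmap_even hBsub hj1).mpr
      exact Finset.mem_filter.mpr ⟨by simp only [Finset.mem_Icc]; omega, hx⟩

lemma WWs_card_eq (k a : ℕ) (δ : Fin k → ℕ) (hδ : ∀ i, δ i ≤ 1) (ha : a ≤ k)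
    (hle : ∑ i, δ i ≤ a) (heven : 2 ∣ (a - ∑ i, δ i)) :
    (WWs k a δ).card = (BBs k δ ((a - ∑ i, δ i)/2)).card := by
  classical
  refine Finset.card_bij' (fun W _ => (Finset.Icc 1 k).filter (fun j => 2*j ∈ W))
    (fun B _ => Gmap δ B) ?hi ?hj ?hleft ?hright
  case hi =>
    intro W hW
    have hGF := G_F_eq hW
    rw [mem_WWs] at hW
    obtain ⟨hsub, hcard, hwt, hsymp⟩ := hW
    set B := (Finset.Icc 1 k).filter (fun j => 2*j ∈ W) with hBdef
    have hBsub : B ⊆ Finset.Icc 1 k := Finset.filter_subset _ _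
    have hdisjF : ∀ i : Fin k, (i:ℕ) + 1 ∈ B → δ i = 0 := by
      intro i hi
      have h2i : 2*((i:ℕ)+1) ∈ W := (Finset.mem_filter.mp hi).2
      have hwt' := hwt i
      have he : 2*(i:ℕ)+2 = 2*((i:ℕ)+1) := by omega
      rw [he, if_pos h2i] at hwt'
      have := hδ i
      split_ifs at hwt' <;> omega
    have hdisj : Disjoint B (Aset δ) := by
      rw [Finset.disjoint_left]
      intro x hxB hxA
      have hx1 : 1 ≤ x := by
        have := hBsub hxB
        simp only [Finset.mem_Icc] at this
        exact this.1
      obtain ⟨i, hi, rfl⟩ : ∃ i : Fin k, δ i = 1 ∧ (i:ℕ)+1 = x := by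
        simp only [Aset, Finset.mem_image, Finset.mem_filter, Finset.mem_univ, true_and] at hxA
        obtain ⟨i, h1, h2⟩ := hxA
        exact ⟨i, h1, h2⟩
      have := hdisjF i hxB
      omega
    have hcardG : (Gmap δ B).card = 2 * B.card + ∑ i, δ i := Gmap_card hBsub hδ hdisj
    rw [hGF, hcard] at hcardG
    rw [mem_BBs]
    refine ⟨hBsub, by omega, hdisjF, ?_⟩
    intro j
    rcases Nat.eq_zero_or_pos j with rfl | hj1
    · have hA0 : Acount δ 0 = 0 := by simp [Acount]
      have hB0 : B ∩ Finset.Icc 1 0 = ∅ := by simp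
      rw [hA0, hB0]
      simp
    rcases le_or_gt j k with hjk | hjk
    · have := Gmap_filter_card hBsub hδ hdisj j
      rw [hGF] at this
      rw [← this]
      exact hsymp j hj1 hjk
    · have hAs : Acount δ j = ∑ i, δ i := Acount_eq_sum δ (by omega)
      have hble : (B ∩ Finset.Icc 1 j).card ≤ B.card :=
        Finset.card_le_card Finset.inter_subset_left
      rw [hAs]
      omega
  case hj =>
    intro B hB
    rw [mem_BBs] at hB
    obtain ⟨hBsub, hBcard, hBdisj, hBsymp⟩ := hB
    have hA : ∀ i : Fin k, (((i:ℕ)+1 ∈ Aset δ) ↔ δ i = 1) := fun i => mem_Aset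
    have hdisj : Disjoint B (Aset δ) := by
      rw [Finset.disjoint_left]
      intro x hxB hxA
      obtain ⟨i, h1, rfl⟩ : ∃ i : Fin k, δ i = 1 ∧ (i:ℕ)+1 = x := by
        simp only [Aset, Finset.mem_image, Finset.mem_filter, Finset.mem_univ, true_and] at hxA
        obtain ⟨i, h1, h2⟩ := hxA
        exact ⟨i, h1, h2⟩
      have := hBdisj i hxB
      omega
    rw [mem_WWs]
    refine ⟨Gmap_subset hBsub, ?_, ?_, ?_⟩
    · rw [Gmap_card hBsub hδ hdisj, hBcard]
      omega
    · intro i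
      have ho : 2*(i:ℕ)+1 = 2*((i:ℕ)+1)-1 := by omega
      have he : 2*(i:ℕ)+2 = 2*((i:ℕ)+1) := by omega
      rw [ho, he]
      have h1le : 1 ≤ (i:ℕ)+1 := by omega
      by_cases h2 : (i:ℕ)+1 ∈ B
      · rw [if_pos ((mem_Gmap_odd hBsub h1le).mpr (Or.inl h2)),
          if_pos ((mem_Gmap_even hBsub h1le).mpr h2), hBdisj i h2]
      · by_cases hδi1 : δ i = 1
        · rw [if_pos ((mem_Gmap_odd hBsub h1le).mpr (Or.inr ((hA i).mpr hδi1))),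
            if_neg (fun hc => h2 ((mem_Gmap_even hBsub h1le).mp hc)), hδi1]
        · have hδ0 : δ i = 0 := by have := hδ i; omega
          rw [if_neg (fun hc => ((mem_Gmap_odd hBsub h1le).mp hc).elim h2
              (fun hc' => hδi1 ((hA i).mp hc'))),
            if_neg (fun hc => h2 ((mem_Gmap_even hBsub h1le).mp hc)), hδ0]
    · intro i hi1 hik
      rw [Gmap_filter_card hBsub hδ hdisj i]
      exact hBsymp i
  case hleft =>
    intro W hW
    exact G_F_eq hW
  case hright =>
    intro B hB
    rw [mem_BBs] at hB
    have hBsub := hB.1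
    ext j
    rw [Finset.mem_filter]
    constructor
    · rintro ⟨hj, hjG⟩
      have hj1 : 1 ≤ j := by
        simp only [Finset.mem_Icc] at hj
        exact hj.1
      exact (mem_Gmap_even hBsub hj1).mp hjG
    · intro hjB
      have hj := hBsub hjB
      have hj1 : 1 ≤ j := by
        simp only [Finset.mem_Icc] at hj
        exact hj.1
      exact ⟨hj, (mem_Gmap_even hBsub hj1).mpr hjB⟩

lemma count_ofFn {a : ℕ} {w : Fin a → ℕ} (hw : Function.Injective w) (x : ℕ) :
    (List.ofFn w).count x = if x ∈ Finset.image w Finset.univ then 1 else 0 := by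
  classical
  by_cases hx : x ∈ Finset.image w Finset.univ
  · rw [if_pos hx]
    apply List.count_eq_one_of_mem (List.nodup_ofFn.mpr hw)
    rw [List.mem_ofFn]
    simpa using hx
  · rw [if_neg hx, List.count_eq_zero]
    rw [List.mem_ofFn]
    simpa using hx

lemma countP_ofFn {a : ℕ} {w : Fin a → ℕ} (hw : Function.Injective w) (p : ℕ → Bool) :
    (List.ofFn w).countP p = ((Finset.image w Finset.univ).filter (fun x => p x = true)).card := by
  classical
  rw [List.countP_eq_length_filter]
  have hnd : ((List.ofFn w).filter p).Nodup := (List.nodup_ofFn.mpr hw).filter p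
  rw [← List.toFinset_card_of_nodup hnd, List.toFinset_filter]
  congr 1
  ext x
  simp [List.mem_ofFn]

lemma ballot_derived {k a : ℕ} {δ : Fin k → ℕ} {w : Fin a → ℕ} (hw : StrictMono w)
    (hweight : ∀ i : Fin k,
      (List.ofFn w).count (2*(i:ℕ)+1) = (List.ofFn w).count (2*(i:ℕ)+2) + δ i) :
    ∀ i p, 1 ≤ i → i ≤ k →
      (((List.ofFn w).take p).count (2*i)) ≤ (((List.ofFn w).take p).count (2*i - 1)) := by
  intro i p hi1 hik
  classical
  set L := List.ofFn w with hL
  have hnodup : L.Nodup := List.nodup_ofFn.mpr hw.injective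
  by_cases hmem : 2*i ∈ L.take p
  · have hmemL : 2*i ∈ L := (List.take_sublist p L).subset hmem
    have hwt := hweight ⟨i-1, by omega⟩
    simp only at hwt
    rw [show 2*((i:ℕ)-1)+1 = 2*i-1 by omega, show 2*((i:ℕ)-1)+2 = 2*i by omega] at hwt
    have hcpos : 0 < L.count (2*i) := List.count_pos_iff.mpr hmemL
    have hmemL' : (2*i-1) ∈ L := by
      apply List.count_pos_iff.mp
      omega
    -- find indices
    obtain ⟨t, ht, hteq⟩ := List.mem_take_iff_getElem.mp hmem
    obtain ⟨t', ht', hteq'⟩ := List.mem_iff_getElem.mp hmemL'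
    have hsorted : L.Pairwise (· < ·) := List.pairwise_ofFn.mpr (fun _ _ h => hw h)
    have htt : t' < t := by
      rcases lt_trichotomy t' t with h | h | h
      · exact h
      · exfalso
        subst h
        have := hteq.symm.trans hteq'
        omega
      · exfalso
        have := List.pairwise_iff_getElem.mp hsorted t t' (by omega) ht' h
        rw [hteq, hteq'] at this
        omega
    have hmemtake : (2*i-1) ∈ L.take p := by
      apply List.mem_take_iff_getElem.mpr
      exact ⟨t', by omega, by rw [hteq']⟩
    have h1 : 1 ≤ (L.take p).count (2*i-1) := List.count_pos_iff.mpr hmemtake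
    have h2 : (L.take p).count (2*i) ≤ L.count (2*i) := (List.take_sublist p L).count_le _
    have h3 : L.count (2*i) ≤ 1 := List.nodup_iff_count_le_one.mp hnodup _
    omega
  · rw [List.count_eq_zero.mpr hmem]
    exact Nat.zero_le _


lemma card_tab (k a : ℕ) (δ : Fin k → ℕ) :
    Nat.card {w : Fin a → ℕ //
      StrictMono w ∧
      (∀ t, 1 ≤ w t ∧ w t ≤ 2 * k) ∧
      (∀ i, 1 ≤ i → i ≤ k →
        ((List.ofFn w).countP (fun x => decide (x ≤ 2 * i))) ≤ i) ∧
      (∀ i p, 1 ≤ i → i ≤ k →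
        (((List.ofFn w).take p).count (2 * i)) ≤ (((List.ofFn w).take p).count (2 * i - 1))) ∧
      (∀ i : Fin k,
        (List.ofFn w).count (2 * (i : ℕ) + 1) =
          (List.ofFn w).count (2 * (i : ℕ) + 2) + δ i)} = (WWs k a δ).card := by
  classical
  rw [← Nat.card_eq_finsetCard]
  apply Nat.card_congr
  refine
    { toFun := fun x => ⟨Finset.image x.1 Finset.univ, ?_⟩
      invFun := fun y => ⟨fun t => (y.1.orderEmbOfFin (mem_WWs.mp y.2).2.1) t, ?_⟩
      left_inv := ?_
      right_inv := ?_ }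
  · -- image is in WWs
    obtain ⟨w, hmono, hrange, hsymp, hballot, hweight⟩ := x
    have hinj := hmono.injective
    rw [mem_WWs]
    refine ⟨?_, ?_, ?_, ?_⟩
    · intro y hy
      simp only [Finset.mem_image, Finset.mem_univ, true_and] at hy
      obtain ⟨t, rfl⟩ := hy
      simp only [Finset.mem_Icc]
      exact hrange t
    · rw [Finset.card_image_of_injective _ hinj, Finset.card_univ, Fintype.card_fin]
    · intro i
      have := hweight i
      rw [count_ofFn hinj, count_ofFn hinj] at this
      exact this
    · intro i hi1 hik
      have := hsymp i hi1 hik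
      rw [countP_ofFn hinj] at this
      calc ((Finset.image w Finset.univ).filter (fun x => x ≤ 2*i)).card
          = ((Finset.image w Finset.univ).filter
              (fun x => (fun y => decide (y ≤ 2*i)) x = true)).card := by
            apply congrArg
            apply Finset.filter_congr
            intro x _
            simp
        _ ≤ i := this
  · -- orderEmbOfFin satisfies the tableau conditions
    obtain ⟨W, hW⟩ := y
    have hW' := mem_WWs.mp hW
    obtain ⟨hsub, hcard, hweight, hsymp⟩ := hW'
    set w : Fin a → ℕ := fun t => (W.orderEmbOfFin hcard) t with hwdef
    have hmono : StrictMono w := (W.orderEmbOfFin hcard).strictMono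
    have himg : Finset.image w Finset.univ = W := by
      ext x
      simp only [Finset.mem_image, Finset.mem_univ, true_and]
      constructor
      · rintro ⟨t, rfl⟩
        exact Finset.orderEmbOfFin_mem W hcard t
      · intro hx
        have : x ∈ Set.range (W.orderEmbOfFin hcard) := by
          rw [Finset.range_orderEmbOfFin]
          exact hx
        obtain ⟨t, ht⟩ := this
        exact ⟨t, ht⟩
    have hinj := hmono.injective
    have hrange : ∀ t, 1 ≤ w t ∧ w t ≤ 2*k := by
      intro t
      have : w t ∈ W := Finset.orderEmbOfFin_mem W hcard t
      have := hsub this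
      simpa using this
    have hweight' : ∀ i : Fin k,
        (List.ofFn w).count (2*(i:ℕ)+1) = (List.ofFn w).count (2*(i:ℕ)+2) + δ i := by
      intro i
      rw [count_ofFn hinj, count_ofFn hinj, himg]
      exact hweight i
    refine ⟨hmono, hrange, ?_, ballot_derived hmono hweight', hweight'⟩
    intro i hi1 hik
    rw [countP_ofFn hinj]
    calc ((Finset.image w Finset.univ).filter (fun x => (fun y => decide (y ≤ 2*i)) x = true)).card
        = ((Finset.image w Finset.univ).filter (fun x => x ≤ 2*i)).card := by
          apply congrArg
          apply Finset.filter_congr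
          intro x _
          simp
      _ ≤ i := by rw [himg]; exact hsymp i hi1 hik
  · -- left inverse
    rintro ⟨w, hw⟩
    apply Subtype.ext
    dsimp only
    symm
    apply Finset.orderEmbOfFin_unique
    · intro t
      exact Finset.mem_image_of_mem _ (Finset.mem_univ t)
    · exact hw.1
  · -- right inverse
    rintro ⟨W, hW⟩
    apply Subtype.ext
    dsimp only
    ext x
    simp only [Finset.mem_image, Finset.mem_univ, true_and]
    constructor
    · rintro ⟨t, rfl⟩
      exact Finset.orderEmbOfFin_mem W _ t
    · intro hx
      have : x ∈ Set.range (W.orderEmbOfFin (mem_WWs.mp hW).2.1) := by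
        rw [Finset.range_orderEmbOfFin]
        exact hx
      obtain ⟨t, ht⟩ := this
      exact ⟨t, ht⟩


/-- One-column `Sp_{2k}` branching count.  The alphabet `1 < 1̄ < ⋯ < k < k̄` is encoded by
`1 < 2 < ⋯ < 2k` with `i ↦ 2i - 1`, `ī ↦ 2i`.  A one-column `Sp_{2k}`-ballot tableau of shape
`(1^a)` is a strictly increasing sequence `w` of length `a` over this alphabet such that for
each `i` at most `i` entries are `≤ ī = 2i` (symplectic condition), and reading from top to
bottom the number of `ī`'s never exceeds the number of `i`'s (ballot condition).  Its weight
`δᵢ = #(i's) − #(ī's) ∈ {0,1}`.  For `0 ≤ a ≤ k` and `δ ∈ {0,1}^k` with `a - |δ| ∈ 2ℕ`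
(`|δ| = Σ δᵢ`), the number of such tableaux of weight `δ` equals
`((k-a+1)/(k-|δ|+1)) · C(k-|δ|+1, (a-|δ|)/2)` (stated in denominator-cleared form). -/
theorem one_column_spk_branching (k a : ℕ) (ha : a ≤ k)
    (δ : Fin k → ℕ) (hδ : ∀ i, δ i ≤ 1)
    (hle : ∑ i, δ i ≤ a) (heven : 2 ∣ (a - ∑ i, δ i)) :
    Nat.card {w : Fin a → ℕ //
      StrictMono w ∧
      (∀ t, 1 ≤ w t ∧ w t ≤ 2 * k) ∧
      (∀ i, 1 ≤ i → i ≤ k →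
        ((List.ofFn w).countP (fun x => decide (x ≤ 2 * i))) ≤ i) ∧
      (∀ i p, 1 ≤ i → i ≤ k →
        (((List.ofFn w).take p).count (2 * i)) ≤ (((List.ofFn w).take p).count (2 * i - 1))) ∧
      (∀ i : Fin k,
        (List.ofFn w).count (2 * (i : ℕ) + 1) =
          (List.ofFn w).count (2 * (i : ℕ) + 2) + δ i)}
    * (k - ∑ i, δ i + 1)
    = (k - a + 1) * (k - ∑ i, δ i + 1).choose ((a - ∑ i, δ i) / 2) := by
  rw [card_tab k a δ, WWs_card_eq k a δ hδ ha hle heven,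
    BBs_card k δ hδ ((a - ∑ i, δ i) / 2)]
  congr 1
  omega
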